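/- Let Ψ_0 : (0,∞) → (0,∞) be a concave index function (continuous, strictly increasing, Ψ_0(δ) → 0 as δ → 0⁺), and let A, B > 0, κ > 0, η > 0 be constants. Then the function Ψ(δ) := inf_{λ ≥ 1} [A·2^{-λκ} + B·2^{(λ+1)η} Ψ_0(δ)] is concave, continuous, and strictly increasing on (0,∞) with Ψ(δ) → 0 as δ → 0⁺, i.e., Ψ is a concave index function. -/

import Mathlib

open Set

/-- If `Ψ₀ : (0,∞) → (0,∞)` is a concave index function (continuous, strictly increasing,
`Ψ₀(δ) → 0` as `δ → 0⁺`) and `A, B, κ, η > 0`, then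
`Ψ(δ) = inf_{λ ≥ 1} [A 2^{-λκ} + B 2^{(λ+1)η} Ψ₀(δ)]` is again a concave index function:
positive on `(0,∞)`, concave, continuous, strictly increasing, with `Ψ(δ) → 0` as `δ → 0⁺`. -/
theorem inf_family_is_concave_index_function
    (Ψ₀ : ℝ → ℝ)
    (hpos : ∀ δ ∈ Ioi (0 : ℝ), 0 < Ψ₀ δ)
    (hconc : ConcaveOn ℝ (Ioi 0) Ψ₀)
    (hcont : ContinuousOn Ψ₀ (Ioi 0))
    (hmono : StrictMonoOn Ψ₀ (Ioi 0))
    (hlim : Filter.Tendsto Ψ₀ (nhdsWithin 0 (Ioi 0)) (nhds 0))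
    (A B κ η : ℝ) (hA : 0 < A) (hB : 0 < B) (hκ : 0 < κ) (hη : 0 < η)
    (Ψ : ℝ → ℝ)
    (hΨ : Ψ = fun δ => ⨅ l : Ici (1 : ℝ),
      (A * (2 : ℝ) ^ (-(l : ℝ) * κ) + B * (2 : ℝ) ^ (((l : ℝ) + 1) * η) * Ψ₀ δ)) :
    (∀ δ ∈ Ioi (0 : ℝ), 0 < Ψ δ) ∧
    ConcaveOn ℝ (Ioi 0) Ψ ∧
    ContinuousOn Ψ (Ioi 0) ∧
    StrictMonoOn Ψ (Ioi 0) ∧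
    Filter.Tendsto Ψ (nhdsWithin 0 (Ioi 0)) (nhds 0) := by
  classical
  set g : ℝ → ℝ → ℝ := fun l δ =>
    A * (2 : ℝ) ^ (-l * κ) + B * (2 : ℝ) ^ ((l + 1) * η) * Ψ₀ δ with hgdef
  have hΨ' : ∀ δ, Ψ δ = ⨅ l : Ici (1 : ℝ), g (l : ℝ) δ := by
    intro δ; rw [hΨ]
  have hrpos : ∀ x : ℝ, (0 : ℝ) < (2 : ℝ) ^ x := fun x => Real.rpow_pos_of_pos two_pos x
  -- positivity of the terms
  have hterm_pos : ∀ (l : ℝ), ∀ δ ∈ Ioi (0 : ℝ), 0 < g l δ := by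
    intro l δ hδ
    have := hpos δ hδ
    have h1 := hrpos (-l * κ)
    have h2 := hrpos ((l + 1) * η)
    positivity
  -- key lower bound by the λ = 1 exponential
  have hterm_lb : ∀ l : Ici (1 : ℝ), ∀ δ ∈ Ioi (0 : ℝ),
      B * (2 : ℝ) ^ (2 * η) * Ψ₀ δ ≤ g (l : ℝ) δ := by
    rintro ⟨l, hl⟩ δ hδ
    have hΨ₀ := hpos δ hδ
    have hexp : (2 : ℝ) ^ (2 * η) ≤ (2 : ℝ) ^ ((l + 1) * η) := by
      apply Real.rpow_le_rpow_of_exponent_le one_le_two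
      nlinarith [mem_Ici.mp hl]
    have h1 := hrpos (-l * κ)
    have h2 := mul_le_mul_of_nonneg_left hexp (by positivity : (0:ℝ) ≤ B * Ψ₀ δ)
    simp only [hgdef]
    nlinarith [h2]
  have hbdd : ∀ δ ∈ Ioi (0 : ℝ),
      BddBelow (Set.range fun l : Ici (1 : ℝ) => g (l : ℝ) δ) := by
    intro δ hδ
    exact ⟨0, by rintro x ⟨l, rfl⟩; exact (hterm_pos l δ hδ).le⟩
  have hΨle : ∀ δ ∈ Ioi (0 : ℝ), ∀ l : Ici (1 : ℝ), Ψ δ ≤ g (l : ℝ) δ := by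
    intro δ hδ l
    rw [hΨ']
    exact ciInf_le (hbdd δ hδ) l
  have hΨlb : ∀ δ ∈ Ioi (0 : ℝ), B * (2 : ℝ) ^ (2 * η) * Ψ₀ δ ≤ Ψ δ := by
    intro δ hδ
    rw [hΨ']
    exact le_ciInf fun l => hterm_lb l δ hδ
  -- positivity
  have hΨpos : ∀ δ ∈ Ioi (0 : ℝ), 0 < Ψ δ := by
    intro δ hδ
    have h1 := hpos δ hδ
    have h2 := hrpos (2 * η)
    have h3 := hΨlb δ hδ
    have h4 : 0 < B * (2:ℝ) ^ (2 * η) * Ψ₀ δ := by positivity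
    linarith
  -- concavity
  have hΨconc : ConcaveOn ℝ (Ioi 0) Ψ := by
    constructor
    · exact convex_Ioi 0
    · intro x hx y hy a b ha hb hab
      have hxy : a • x + b • y ∈ Ioi (0 : ℝ) := (convex_Ioi 0) hx hy ha hb hab
      rw [hΨ' (a • x + b • y)]
      apply le_ciInf
      intro l
      have hΨ₀conc := hconc.2 hx hy ha hb hab
      have hgx := hΨle x hx l
      have hgy := hΨle y hy l
      have hBpos : 0 < B * (2 : ℝ) ^ (((l : ℝ) + 1) * η) := by
        have := hrpos (((l : ℝ) + 1) * η); positivity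
      calc a • Ψ x + b • Ψ y ≤ a • g (l : ℝ) x + b • g (l : ℝ) y := by
            simp only [smul_eq_mul]
            have t1 := mul_le_mul_of_nonneg_left hgx ha
            have t2 := mul_le_mul_of_nonneg_left hgy hb
            linarith
        _ ≤ g (l : ℝ) (a • x + b • y) := by
            simp only [hgdef, smul_eq_mul]
            simp only [smul_eq_mul] at hΨ₀conc
            have t3 := mul_le_mul_of_nonneg_left hΨ₀conc hBpos.le
            have t4 : a * (A * (2:ℝ) ^ (-(l:ℝ) * κ)) + b * (A * (2:ℝ) ^ (-(l:ℝ) * κ))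
                = A * (2:ℝ) ^ (-(l:ℝ) * κ) := by
              rw [← add_mul, hab, one_mul]
            nlinarith [t3, t4]
  -- continuity
  have hΨcont : ContinuousOn Ψ (Ioi 0) := hΨconc.continuousOn isOpen_Ioi
  -- strict monotonicity
  have hΨmono : StrictMonoOn Ψ (Ioi 0) := by
    intro x hx y hy hxy
    have hΔ : 0 < Ψ₀ y - Ψ₀ x := sub_pos.mpr (hmono hx hy hxy)
    have key : Ψ x + B * (2 : ℝ) ^ (2 * η) * (Ψ₀ y - Ψ₀ x) ≤ Ψ y := by
      rw [hΨ' y]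
      apply le_ciInf
      intro l
      have h1 := hΨle x hx l
      have hexp : (2 : ℝ) ^ (2 * η) ≤ (2 : ℝ) ^ (((l : ℝ) + 1) * η) := by
        apply Real.rpow_le_rpow_of_exponent_le one_le_two
        nlinarith [mem_Ici.mp l.2]
      have : g (l : ℝ) y = g (l : ℝ) x + B * (2 : ℝ) ^ (((l : ℝ) + 1) * η) * (Ψ₀ y - Ψ₀ x) := by
        simp only [hgdef]; ring
      have t5 := mul_le_mul_of_nonneg_left hexp (by positivity : (0:ℝ) ≤ B * (Ψ₀ y - Ψ₀ x))
      nlinarith [t5]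
    have t6 : 0 < B * (2:ℝ) ^ (2 * η) * (Ψ₀ y - Ψ₀ x) := by
      have := hrpos (2 * η); positivity
    linarith
  -- limit at 0
  have hΨlim : Filter.Tendsto Ψ (nhdsWithin 0 (Ioi 0)) (nhds 0) := by
    rw [tendsto_order]
    constructor
    · intro a ha
      filter_upwards [self_mem_nhdsWithin] with δ hδ
      exact lt_trans ha (hΨpos δ hδ)
    · intro ε hε
      -- choose l with A * 2^(-lκ) < ε/2
      set l : ℝ := max 1 (Real.logb 2 (2 * A / ε) / κ + 1) with hl
      have hl1 : 1 ≤ l := le_max_left _ _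
      have hsmall : A * (2 : ℝ) ^ (-l * κ) < ε / 2 := by
        have hpos2A : 0 < 2 * A / ε := by positivity
        have hlgt : Real.logb 2 (2 * A / ε) < l * κ := by
          have h1 : Real.logb 2 (2 * A / ε) / κ + 1 ≤ l := le_max_right _ _
          have h2 : Real.logb 2 (2 * A / ε) / κ * κ = Real.logb 2 (2 * A / ε) := by
            field_simp
          nlinarith
        have : 2 * A / ε < (2 : ℝ) ^ (l * κ) := by
          calc 2 * A / ε = (2 : ℝ) ^ Real.logb 2 (2 * A / ε) :=
                (Real.rpow_logb two_pos (by norm_num) hpos2A).symm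
            _ < (2 : ℝ) ^ (l * κ) := by
                exact Real.rpow_lt_rpow_of_exponent_lt one_lt_two hlgt
        have hinv : (2 : ℝ) ^ (-l * κ) = ((2 : ℝ) ^ (l * κ))⁻¹ := by
          rw [neg_mul, Real.rpow_neg (by norm_num)]
        rw [hinv]
        rw [div_lt_iff₀ hε] at this
        have hp := hrpos (l * κ)
        rw [mul_inv_lt_iff₀ hp]
        nlinarith
      -- eventually Ψ₀ δ is small
      have hC : 0 < B * (2 : ℝ) ^ ((l + 1) * η) := by
        have := hrpos ((l + 1) * η); positivity
      have hev : ∀ᶠ δ in nhdsWithin 0 (Ioi 0),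
          Ψ₀ δ < ε / 2 / (B * (2 : ℝ) ^ ((l + 1) * η)) := by
        have := hlim (Iio_mem_nhds (show (0:ℝ) < ε / 2 / (B * (2 : ℝ) ^ ((l + 1) * η)) by
          positivity))
        filter_upwards [this] with δ hδ using hδ
      filter_upwards [hev, self_mem_nhdsWithin] with δ hδ1 hδ2
      have h1 : Ψ δ ≤ g l δ := hΨle δ hδ2 ⟨l, hl1⟩
      have h2 : B * (2 : ℝ) ^ ((l + 1) * η) * Ψ₀ δ < ε / 2 := by
        rw [lt_div_iff₀ hC] at hδ1
        nlinarith
      calc Ψ δ ≤ g l δ := h1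
        _ < ε := by simp only [hgdef]; nlinarith
  exact ⟨hΨpos, hΨconc, hΨcont, hΨmono, hΨlim⟩
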